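/- Let 𝓕 be a finite family of finite sets and let n ≥ 1. Suppose that for every function S : [ω_n]^{<ω} → [ω_n]^{<ω} satisfying (i) S(A) ⊆ S(B) whenever A ⊆ B, (ii) α ∉ S(A) whenever A is nonempty and max(A) < α < ω_n, and (iii) S({α}) = ∅ for all α < ω_n, there exist a set Y ⊆ ω_n and a bijection u : ⋃𝓕 → Y such that S(u(A)) ∩ Y ⊆ u(A) for all A ∈ 𝓕. Then 𝔣𝔯(𝓕) ≤ n. -/

import Mathlib

open Cardinal

noncomputable section

/-- The underlying set of the ordinal `ω_n`, the least ordinal of cardinality `ℵ_n`,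
realized as a type. -/
abbrev OmegaN (n : ℕ) : Type := ((Cardinal.aleph n).ord).ToType

/-- `n` is *free* for the family `𝓕` of finite sets: for every set mapping
`S : [ω_n]^{<ω} → [ω_n]^{<ω}` there is a bijection `u` from `⋃ 𝓕` onto a subset
`Y = u '' (⋃ 𝓕)` of `ω_n` such that `S (u '' A) ∩ Y ⊆ u '' A` for all `A ∈ 𝓕`. -/
def IsFree {α : Type*} [DecidableEq α] (𝓕 : Finset (Finset α)) (n : ℕ) : Prop :=
  ∀ S : Finset (OmegaN n) → Finset (OmegaN n),
    ∃ u : α → OmegaN n, Set.InjOn u ↑(𝓕.sup id) ∧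
      ∀ A ∈ 𝓕, S (A.image u) ∩ (𝓕.sup id).image u ⊆ A.image u

/-- The index `𝔣𝔯 𝓕`: the least `n` which is free for `𝓕`. -/
noncomputable def fr {α : Type*} [DecidableEq α] (𝓕 : Finset (Finset α)) : ℕ :=
  sInf {n | IsFree 𝓕 n}

/-- Conditions (1)–(4) of a nested-orders family on `X`,
where a sequence `(t₁, …, t_k)` is represented by the list `[t₁, …, t_k]`. -/
def NestedBase {α : Type*} (X : Set α) (S : Set (List α)) : Prop :=
  (∀ l ∈ S, ∀ x ∈ l, x ∈ X) ∧
  (∀ t ∈ X, [t] ∈ S) ∧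
  (∀ l ∈ S, l.Nodup) ∧
  (∀ (l : List α) (t : α), l ++ [t] ∈ S → l ∈ S) ∧
  (∀ (l : List α) (s t : α), l ++ [s, t] ∈ S → l ++ [t] ∈ S) ∧
  (∀ (l : List α) (s t u : α), l ++ [s, t] ∈ S → l ++ [t, u] ∈ S → l ++ [s, u] ∈ S)

/-- A nested-orders family on `X`: conditions (1)–(5). -/
def IsNestedOrders {α : Type*} (X : Set α) (S : Set (List α)) : Prop :=
  NestedBase X S ∧
  ∀ (l : List α) (s t : α), l ++ [t] ∈ S → l ++ [s] ∈ S → t ≠ s →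
    (l ++ [t, s] ∈ S ∨ l ++ [s, t] ∈ S)

/-- An `n`-nested-orders family on `X`: sequences of length at most `n+2`,
conditions (1)–(4), and condition (5) for `k < n`. -/
def IsNNestedOrders {α : Type*} (n : ℕ) (X : Set α) (S : Set (List α)) : Prop :=
  NestedBase X S ∧
  (∀ l ∈ S, l.length ≤ n + 2) ∧
  ∀ (l : List α) (s t : α), l.length < n → l ++ [t] ∈ S → l ++ [s] ∈ S → t ≠ s →
    (l ++ [t, s] ∈ S ∨ l ++ [s, t] ∈ S)

/-- `A` satisfies the defining condition of membership in `𝓕_{𝔖,n}`: whenever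
`(t₁, …, t_{n+2}) ∈ 𝔖` and `t₁, …, t_{n+1} ∈ A`, also `t_{n+2} ∈ A`. -/
def MemFam {α : Type*} (n : ℕ) (S : Set (List α)) (A : Finset α) : Prop :=
  ∀ (l : List α) (t : α), l.length = n + 1 → l ++ [t] ∈ S →
    (∀ x ∈ l, x ∈ A) → t ∈ A

/-- The index `𝔫𝔬 𝓕`: the least `n` for which there is an `n`-nested-orders family `𝔖`
on `⋃ 𝓕` with `𝓕 ⊆ 𝓕_{𝔖,n}`. -/
noncomputable def no {α : Type*} [DecidableEq α] (𝓕 : Finset (Finset α)) : ℕ :=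
  sInf {n | ∃ S : Set (List α),
    IsNNestedOrders n ↑(𝓕.sup id) S ∧ ∀ A ∈ 𝓕, MemFam n S A}

section SpecialSAux

open Ordinal

theorem OmegaNAux.isRegular {n : ℕ} (hn : 1 ≤ n) : (Cardinal.aleph n).IsRegular := by
  obtain ⟨m, rfl⟩ := Nat.exists_eq_add_of_le hn
  rw [show ((1 + m : ℕ) : Ordinal) = Order.succ (m : Ordinal) by
    rw [show 1 + m = m + 1 by omega]; push_cast; rw [Ordinal.add_one_eq_succ]]
  exact Cardinal.isRegular_aleph_succ _

theorem OmegaNAux.aleph0_lt {n : ℕ} (hn : 1 ≤ n) : Cardinal.aleph0 < Cardinal.aleph n := by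
  rw [← Cardinal.aleph_zero]
  exact Cardinal.aleph_lt_aleph.mpr (by exact_mod_cast hn)

/-- The key construction: a strictly monotone map `e : ω_n → ω_n` whose range `W` is
"upward free" for `S` and free for singleton images. -/
theorem exists_goodEmbedding {n : ℕ} (hn : 1 ≤ n)
    (S : Finset (OmegaN n) → Finset (OmegaN n)) :
    ∃ e : OmegaN n → OmegaN n, StrictMono e ∧
      (∀ B : Finset (OmegaN n), (∀ b ∈ B, b ∈ Set.range e) →
        ∀ x ∈ Set.range e, x ∈ S B → ∃ b ∈ B, x ≤ b) ∧
      (∀ γ x : OmegaN n, γ ∈ Set.range e → x ∈ Set.range e → x < γ → x ∉ S {γ}) := by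
  classical
  set κ := Cardinal.aleph n with hκ
  have hreg := OmegaNAux.isRegular hn
  have hω := OmegaNAux.aleph0_lt hn
  have holim : Order.IsSuccLimit κ.ord := isSuccLimit_ord hreg.aleph0_le
  haveI hnem : Nonempty (OmegaN n) := by
    rw [Ordinal.nonempty_toType_iff]
    exact ne_of_gt (Cardinal.lt_ord.mpr (by simpa using Cardinal.aleph_pos (n : Ordinal)))
  -- small sets are strictly bounded above
  have bdd : ∀ A : Set (OmegaN n), #A < κ → ∃ y, ∀ a ∈ A, a < y := by
    intro A hA
    set ψ := Ordinal.ToType.mk (o := κ.ord) with hψ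
    let f : A → Ordinal := fun a => (ψ.symm a.1).1 + 1
    have hf : ∀ a, f a < κ.ord := fun a => by show (ψ.symm a.1).1 + 1 < κ.ord; rw [Ordinal.add_one_eq_succ]; exact holim.succ_lt (ψ.symm a.1).2
    have hs : iSup f < κ.ord := Cardinal.iSup_lt_ord_of_isRegular hreg hA hf
    refine ⟨ψ ⟨iSup f, hs⟩, fun a ha => ?_⟩
    have h1 : (ψ.symm a).1 < iSup f := lt_of_lt_of_le (lt_add_one _) (Ordinal.le_iSup f ⟨a, ha⟩)
    have h2 : ψ.symm a < ψ.symm (ψ ⟨iSup f, hs⟩) := by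
      rw [OrderIso.symm_apply_apply]; exact Subtype.mk_lt_mk.mpr h1
    simpa using ψ.symm.lt_iff_lt.mp h2
  have iio_small : ∀ x : OmegaN n, #(Set.Iio x) < κ := fun x => Cardinal.mk_Iio_toType_ord_lt x
  have iic_small : ∀ x : OmegaN n, #(Set.Iic x) < κ := by
    intro x
    have hsub : Set.Iic x ⊆ insert x (Set.Iio x) := by
      intro y hy
      rcases lt_or_eq_of_le (Set.mem_Iic.mp hy) with h | h
      · exact Set.mem_insert_of_mem _ h
      · exact h ▸ Set.mem_insert _ _
    calc #(Set.Iic x) ≤ #(insert x (Set.Iio x) : Set (OmegaN n)) :=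
          Cardinal.mk_le_mk_of_subset hsub
      _ ≤ #(Set.Iio x) + 1 := Cardinal.mk_insert_le
      _ < κ := Cardinal.add_lt_of_lt hω.le (iio_small x)
          (lt_trans Cardinal.one_lt_aleph0 hω)
  -- Neumer's argument: a large set free for singleton images from below
  obtain ⟨b0⟩ := hnem
  let f : OmegaN n → OmegaN n := fun γ =>
    if h : ((S {γ}).filter (· < γ)).Nonempty then ((S {γ}).filter (· < γ)).max' h else b0
  have fact2 : ∀ γ x, x ∈ S {γ} → x < γ → x ≤ f γ := by
    intro γ x hx hlt
    have hmem : x ∈ (S {γ}).filter (· < γ) := Finset.mem_filter.mpr ⟨hx, hlt⟩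
    have hne : ((S {γ}).filter (· < γ)).Nonempty := ⟨x, hmem⟩
    simp only [f, dif_pos hne]
    exact Finset.le_max' _ _ hmem
  have fact1 : ∀ γ, b0 < γ → f γ < γ := by
    intro γ hγ
    by_cases hne : ((S {γ}).filter (· < γ)).Nonempty
    · simp only [f, dif_pos hne]
      exact (Finset.mem_filter.mp (Finset.max'_mem _ hne)).2
    · simp only [f, dif_neg hne]; exact hγ
  have hT : ∃ δ : OmegaN n, ∀ y, ∃ γ, f γ ≤ δ ∧ y < γ := by
    by_contra hcon
    push_neg at hcon
    choose g hg using hcon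
    -- hg : ∀ δ γ, f γ ≤ δ → γ ≤ g δ
    have step : ∀ x : OmegaN n, ∃ y, ∀ a ∈ insert x (g '' Set.Iic x), a < y := by
      intro x
      apply bdd
      calc #(insert x (g '' Set.Iic x) : Set (OmegaN n)) ≤ #(g '' Set.Iic x) + 1 :=
            Cardinal.mk_insert_le
        _ < κ := Cardinal.add_lt_of_lt hω.le
            (lt_of_le_of_lt Cardinal.mk_image_le (iic_small x))
            (lt_trans Cardinal.one_lt_aleph0 hω)
    choose nxt hnxt using step
    obtain ⟨c0, hc0⟩ := bdd {b0} (by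
      rw [Cardinal.mk_singleton]; exact lt_trans Cardinal.one_lt_aleph0 hω)
    let c : ℕ → OmegaN n := fun k => Nat.rec c0 (fun _ ih => nxt ih) k
    have hcb0 : b0 < c 0 := hc0 b0 rfl
    have hcsucc : ∀ k, c k < c (k + 1) := fun k =>
      hnxt (c k) _ (Set.mem_insert _ _)
    obtain ⟨yub, hyub⟩ := bdd (Set.range c) (lt_of_le_of_lt Cardinal.mk_range_le
      (by rw [Cardinal.mk_nat]; exact hω))
    set A := {y : OmegaN n | ∀ k, c k < y} with hA
    have hAne : A.Nonempty := ⟨yub, fun k => hyub _ ⟨k, rfl⟩⟩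
    have hwf : WellFounded ((· < ·) : OmegaN n → OmegaN n → Prop) := wellFounded_lt
    set γs := hwf.min A hAne with hγsdef
    have hγs : ∀ k, c k < γs := hwf.min_mem A hAne
    have hmin : ∀ x, x < γs → x ∉ A := fun x hx hxA => hwf.not_lt_min A hxA hx
    have h1 : b0 < γs := lt_trans hcb0 (hγs 0)
    have h2 : f γs < γs := fact1 _ h1
    obtain ⟨k, hk⟩ : ∃ k, f γs ≤ c k := by
      by_contra hcon2
      push_neg at hcon2
      exact hmin _ h2 hcon2
    have h4 : g (f γs) < c (k + 1) :=
      hnxt (c k) _ (Set.mem_insert_of_mem _ ⟨f γs, hk, rfl⟩)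
    have h5 : γs ≤ g (f γs) := hg (f γs) γs le_rfl
    exact absurd (lt_of_le_of_lt h5 (lt_trans h4 (hγs (k + 1)))) (lt_irrefl _)
  obtain ⟨δ₀, hδ₀⟩ := hT
  set Z := {γ : OmegaN n | f γ ≤ δ₀ ∧ δ₀ < γ} with hZdef
  have hZunb : ∀ y, ∃ z ∈ Z, y < z := by
    intro y
    obtain ⟨γ, h1, h2⟩ := hδ₀ (max y δ₀)
    exact ⟨γ, ⟨h1, lt_of_le_of_lt (le_max_right _ _) h2⟩,
      lt_of_le_of_lt (le_max_left _ _) h2⟩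
  have hZ : ∀ γ ∈ Z, ∀ x ∈ Z, x < γ → x ∉ S {γ} := by
    intro γ hγ x hx hlt hmem
    exact absurd (le_trans (fact2 γ x hmem hlt) hγ.1) (not_le.mpr hx.2)
  -- cardinality of the "bad" set over a small set of previous values
  let Bad : Set (OmegaN n) → Set (OmegaN n) := fun P =>
    ⋃ B : {B : Finset (OmegaN n) // ↑B ⊆ P}, ((S B.1 : Finset (OmegaN n)) : Set (OmegaN n))
  have hBadmem : ∀ (P : Set (OmegaN n)) (x : OmegaN n),
      x ∈ Bad P ↔ ∃ B : Finset (OmegaN n), ↑B ⊆ P ∧ x ∈ S B := by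
    intro P x
    simp only [Bad, Set.mem_iUnion, Finset.mem_coe]
    constructor
    · rintro ⟨⟨B, hB⟩, h2⟩; exact ⟨B, hB, h2⟩
    · rintro ⟨B, hB, h2⟩; exact ⟨⟨B, hB⟩, h2⟩
  have bad_small : ∀ P : Set (OmegaN n), #P < κ → #(Bad P) < κ := by
    intro P hP
    haveI : Nonempty {B : Finset (OmegaN n) // ↑B ⊆ P} := ⟨⟨∅, by simp⟩⟩
    have hI : #{B : Finset (OmegaN n) // ↑B ⊆ P} < κ := by
      have hsurj : Function.Surjective
          (fun l : List P => (⟨(l.map Subtype.val).toFinset, by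
            intro x hx
            simp only [List.coe_toFinset, List.mem_map, Set.mem_setOf_eq] at hx
            obtain ⟨⟨y, hy⟩, _, rfl⟩ := hx
            exact hy⟩ : {B : Finset (OmegaN n) // ↑B ⊆ P})) := by
        rintro ⟨B, hB⟩
        refine ⟨B.toList.attach.map (fun x => ⟨x.1, hB (by
          simpa using Finset.mem_toList.mp x.2)⟩), ?_⟩
        apply Subtype.ext
        simp only [List.map_map]
        have : (Subtype.val ∘ fun x : {x // x ∈ B.toList} =>
            (⟨x.1, hB (by simpa using Finset.mem_toList.mp x.2)⟩ : P)) = Subtype.val := rfl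
        rw [this, List.attach_map_subtype_val, Finset.toList_toFinset]
      calc #{B : Finset (OmegaN n) // ↑B ⊆ P} ≤ #(List P) :=
            Cardinal.mk_le_of_surjective hsurj
        _ ≤ max Cardinal.aleph0 #P := Cardinal.mk_list_le_max _
        _ < κ := max_lt hω hP
    calc #(Bad P) ≤ #{B : Finset (OmegaN n) // ↑B ⊆ P} *
          ⨆ B : {B : Finset (OmegaN n) // ↑B ⊆ P}, #((S B.1 : Finset (OmegaN n)) : Set (OmegaN n)) :=
          Cardinal.mk_iUnion_le _
      _ ≤ #{B : Finset (OmegaN n) // ↑B ⊆ P} * Cardinal.aleph0 := by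
          apply mul_le_mul_right
          exact ciSup_le' fun B => le_of_lt (S B.1).finite_toSet.lt_aleph0
      _ < κ := Cardinal.mul_lt_of_lt hω.le hI hω
  -- the main transfinite recursion
  have exmain : ∀ P : Set (OmegaN n), #P < κ →
      ∃ z : OmegaN n, z ∈ Z ∧ (∀ p ∈ P, p < z) ∧ z ∉ Bad P := by
    intro P hP
    obtain ⟨y₁, hy₁⟩ := bdd P hP
    set U := {z : OmegaN n | z ∈ Z ∧ ∀ p ∈ P, p < z} with hU
    have hUunb : ∀ y, ∃ u ∈ U, y < u := by
      intro y
      obtain ⟨z, hz, hz2⟩ := hZunb (max y y₁)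
      exact ⟨z, ⟨hz, fun p hp => lt_trans (hy₁ p hp)
        (lt_of_le_of_lt (le_max_right _ _) hz2)⟩, lt_of_le_of_lt (le_max_left _ _) hz2⟩
    have hUbig : ¬ #U < κ := by
      intro hlt
      obtain ⟨y, hy⟩ := bdd U hlt
      obtain ⟨u, hu, hyu⟩ := hUunb y
      exact absurd (hy u hu) (not_lt.mpr hyu.le)
    have hne : (U \ Bad P).Nonempty := by
      rw [Set.nonempty_iff_ne_empty]
      intro hemp
      have hsub : U ⊆ Bad P := Set.diff_eq_empty.mp hemp
      exact hUbig (lt_of_le_of_lt (Cardinal.mk_le_mk_of_subset hsub) (bad_small P hP))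
    obtain ⟨z, hzU, hzB⟩ := hne
    exact ⟨z, hzU.1, hzU.2, hzB⟩
  haveI : Nonempty (OmegaN n) := ⟨b0⟩
  have hwf : WellFounded ((· < ·) : OmegaN n → OmegaN n → Prop) := wellFounded_lt
  let step : ∀ x : OmegaN n, (∀ y : OmegaN n, y < x → OmegaN n) → OmegaN n := fun x IH =>
    Classical.epsilon (fun z => z ∈ Z ∧ (∀ y (h : y < x), IH y h < z) ∧
      z ∉ Bad {w | ∃ y, ∃ h : y < x, IH y h = w})
  set F : OmegaN n → OmegaN n := hwf.fix step with hFdef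
  have Feq : ∀ x, F x = step x (fun y _ => F y) := fun x => hwf.fix_eq step x
  have Fspec : ∀ x : OmegaN n, F x ∈ Z ∧ (∀ y, y < x → F y < F x) ∧
      F x ∉ Bad (F '' Set.Iio x) := by
    intro x
    have hset : {w | ∃ y, ∃ h : y < x, F y = w} = F '' Set.Iio x := by
      ext w
      simp only [Set.mem_setOf_eq, Set.mem_image, Set.mem_Iio]
      constructor
      · rintro ⟨y, h, rfl⟩; exact ⟨y, h, rfl⟩
      · rintro ⟨y, h, rfl⟩; exact ⟨y, h, rfl⟩
    have hP : #(F '' Set.Iio x) < κ := lt_of_le_of_lt Cardinal.mk_image_le (iio_small x)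
    obtain ⟨z, hz1, hz2, hz3⟩ := exmain _ hP
    have hex : ∃ z, z ∈ Z ∧ (∀ y (h : y < x), F y < z) ∧
        z ∉ Bad {w | ∃ y, ∃ h : y < x, F y = w} :=
      ⟨z, hz1, fun y h => hz2 _ ⟨y, h, rfl⟩, by rw [hset]; exact hz3⟩
    have hspec := Classical.epsilon_spec hex
    rw [Feq x]
    refine ⟨hspec.1, fun y h => hspec.2.1 y h, fun hmem => hspec.2.2 ?_⟩
    obtain ⟨B, hB, hxB⟩ := (hBadmem _ _).mp hmem
    exact (hBadmem _ _).mpr ⟨B, by rw [hset]; exact hB, hxB⟩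
  have Fmono : StrictMono F := fun a b hab => (Fspec b).2.1 a hab
  refine ⟨F, Fmono, ?_, ?_⟩
  · intro B hB x hx hxS
    by_contra hcon
    push_neg at hcon
    obtain ⟨a, rfl⟩ := hx
    have hBsub : ↑B ⊆ F '' Set.Iio a := by
      intro b hb
      obtain ⟨c, rfl⟩ := hB b hb
      have hlt : F c < F a := hcon _ hb
      exact ⟨c, Fmono.lt_iff_lt.mp hlt, rfl⟩
    exact (Fspec a).2.2 ((hBadmem _ _).mpr ⟨B, hBsub, hxS⟩)
  · intro γ x hγ hx hlt hmem
    obtain ⟨a, rfl⟩ := hγ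
    obtain ⟨b, rfl⟩ := hx
    exact hZ _ (Fspec a).1 _ (Fspec b).1 hlt hmem

end SpecialSAux

/-- Lemma 2.1 (specialS): if the freeness conclusion holds for all monotone,
regressive set-mappings vanishing on singletons, then `𝔣𝔯 𝓕 ≤ n`. -/
theorem statement2 {α : Type*} [DecidableEq α] (𝓕 : Finset (Finset α)) (n : ℕ) (hn : 1 ≤ n)
    (h : ∀ S : Finset (OmegaN n) → Finset (OmegaN n),
      (∀ A B : Finset (OmegaN n), A ⊆ B → S A ⊆ S B) →
      (∀ (A : Finset (OmegaN n)) (a : OmegaN n), A.Nonempty → (∀ b ∈ A, b < a) → a ∉ S A) →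
      (∀ a : OmegaN n, S {a} = ∅) →
      ∃ u : α → OmegaN n, Set.InjOn u ↑(𝓕.sup id) ∧
        ∀ A ∈ 𝓕, S (A.image u) ∩ (𝓕.sup id).image u ⊆ A.image u) :
    fr 𝓕 ≤ n := by
  classical
  refine Nat.sInf_le ?_
  show IsFree 𝓕 n
  intro S
  obtain ⟨e, he_mono, hP1, hP2⟩ := exists_goodEmbedding hn S
  have he_inj : Function.Injective e := he_mono.injective
  set X := 𝓕.sup id with hXdef
  haveI : Nonempty (OmegaN n) := Ordinal.nonempty_toType_iff.mpr
    (ne_of_gt (Cardinal.lt_ord.mpr (by simpa using Cardinal.aleph_pos (n : Ordinal))))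
  set p := Function.invFun e with hpdef
  have hpe : ∀ y, p (e y) = y := fun y => Function.leftInverse_invFun he_inj y
  set S'' : Finset (OmegaN n) → Finset (OmegaN n) := fun C =>
    ((((C.image e).powerset.filter (fun B => 2 ≤ B.card)).biUnion S).filter
      (fun x => x ∈ Set.range e ∧ ∃ d ∈ C.image e, x ≤ d)).image p with hS''
  have hmem : ∀ (C : Finset (OmegaN n)) (x₀ : OmegaN n), x₀ ∈ S'' C ↔
      ∃ x : OmegaN n, ((∃ B : Finset (OmegaN n), B ⊆ C.image e ∧ 2 ≤ B.card ∧ x ∈ S B) ∧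
        (x ∈ Set.range e ∧ ∃ d ∈ C.image e, x ≤ d)) ∧ p x = x₀ := by
    intro C x₀
    simp only [hS'', Finset.mem_image, Finset.mem_filter, Finset.mem_biUnion,
      Finset.mem_powerset]
    constructor
    · rintro ⟨x, ⟨⟨B, hB, hxB⟩, h2⟩, rfl⟩
      exact ⟨x, ⟨⟨B, hB.1, hB.2, hxB⟩, h2⟩, rfl⟩
    · rintro ⟨x, ⟨⟨B, hB1, hB2, hxB⟩, h2⟩, rfl⟩
      exact ⟨x, ⟨⟨B, ⟨hB1, hB2⟩, hxB⟩, h2⟩, rfl⟩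
  have hmono : ∀ A B : Finset (OmegaN n), A ⊆ B → S'' A ⊆ S'' B := by
    intro A B hAB x₀ hx₀
    rw [hmem] at hx₀ ⊢
    obtain ⟨x, ⟨⟨Bw, hBw1, hBw2, hBw3⟩, hxr, d, hd, hxd⟩, rfl⟩ := hx₀
    exact ⟨x, ⟨⟨Bw, hBw1.trans (Finset.image_subset_image hAB), hBw2, hBw3⟩, hxr,
      d, Finset.image_subset_image hAB hd, hxd⟩, rfl⟩
  have hregr : ∀ (A : Finset (OmegaN n)) (a : OmegaN n),
      A.Nonempty → (∀ b ∈ A, b < a) → a ∉ S'' A := by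
    intro A a _ ha hmem'
    rw [hmem] at hmem'
    obtain ⟨x, ⟨_, ⟨y, rfl⟩, d, hd, hxd⟩, hpx⟩ := hmem'
    rw [hpe] at hpx
    subst hpx
    obtain ⟨c, hc, rfl⟩ := Finset.mem_image.mp hd
    exact absurd (ha c hc) (not_lt.mpr (he_mono.le_iff_le.mp hxd))
  have hsing : ∀ a : OmegaN n, S'' {a} = ∅ := by
    intro a
    rw [Finset.eq_empty_iff_forall_notMem]
    intro x₀ hx₀
    rw [hmem] at hx₀
    obtain ⟨x, ⟨⟨Bw, hBw1, hBw2, _⟩, _⟩, _⟩ := hx₀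
    have hle : Bw.card ≤ 1 := by
      have := Finset.card_le_card hBw1
      rwa [Finset.image_singleton, Finset.card_singleton] at this
    omega
  obtain ⟨u₀, hu₀inj, hu₀⟩ := h S'' hmono hregr hsing
  refine ⟨fun t => e (u₀ t), ?_, ?_⟩
  · intro a ha b hb hab
    exact hu₀inj ha hb (he_inj hab)
  · intro A hA x hx
    rw [Finset.mem_inter] at hx
    obtain ⟨hxS, hxY⟩ := hx
    have himg : ∀ C : Finset α, C.image (fun t => e (u₀ t)) = (C.image u₀).image e := by
      intro C
      rw [Finset.image_image]
      rfl
    obtain ⟨t, htX, htx⟩ := Finset.mem_image.mp hxY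
    have htx' : e (u₀ t) = x := htx
    have hxr : x ∈ Set.range e := ⟨u₀ t, htx'⟩
    have hepx : e (p x) = x := by rw [← htx', hpe]
    have hBr : ∀ b ∈ A.image (fun t => e (u₀ t)), b ∈ Set.range e := by
      intro b hb
      obtain ⟨s, _, rfl⟩ := Finset.mem_image.mp hb
      exact ⟨u₀ s, rfl⟩
    obtain ⟨b, hbB, hxb⟩ := hP1 _ hBr x hxr hxS
    have hAX : A ⊆ X := Finset.le_sup (f := id) hA
    have huinjA : Set.InjOn (fun t => e (u₀ t)) ↑A := by
      intro a ha b hb hab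
      exact hu₀inj (hAX ha) (hAX hb) (he_inj hab)
    by_cases hcard : 2 ≤ A.card
    · have hcard2 : 2 ≤ (A.image (fun t => e (u₀ t))).card := by
        rwa [Finset.card_image_of_injOn huinjA]
      have hpxmem : p x ∈ S'' (A.image u₀) := by
        rw [hmem]
        refine ⟨x, ⟨⟨A.image (fun t => e (u₀ t)), ?_, hcard2, hxS⟩, hxr,
          ⟨b, ?_, hxb⟩⟩, rfl⟩
        · rw [himg]
        · rw [← himg]; exact hbB
      have hpxY : p x ∈ X.image u₀ := by
        refine Finset.mem_image.mpr ⟨t, htX, ?_⟩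
        rw [← htx', hpe]
      have hfinal := hu₀ A hA (Finset.mem_inter.mpr ⟨hpxmem, hpxY⟩)
      obtain ⟨s, hs, hps⟩ := Finset.mem_image.mp hfinal
      refine Finset.mem_image.mpr ⟨s, hs, ?_⟩
      show e (u₀ s) = x
      rw [hps, hepx]
    · push_neg at hcard
      have hAne : A.Nonempty := by
        obtain ⟨s, hs, _⟩ := Finset.mem_image.mp hbB
        exact ⟨s, hs⟩
      have hA1 : A.card = 1 := by
        have := Finset.card_pos.mpr hAne
        omega
      obtain ⟨t₀, rfl⟩ := Finset.card_eq_one.mp hA1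
      have hb' : b = e (u₀ t₀) := by
        have := hbB
        rw [Finset.image_singleton, Finset.mem_singleton] at this
        exact this
      rcases eq_or_lt_of_le hxb with heq | hlt
      · rw [Finset.image_singleton, Finset.mem_singleton, heq, hb']
      · exfalso
        have hS1 : x ∈ S {e (u₀ t₀)} := by
          rwa [Finset.image_singleton] at hxS
        exact hP2 (e (u₀ t₀)) x ⟨u₀ t₀, rfl⟩ hxr (hb' ▸ hlt) hS1

end
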